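/- For every unit spinor φ ∈ Δ = ℂ⁴ (with respect to the standard Hermitian product), there exists a unique vector y ∈ ℝ⁵ such that y·φ = iφ under the Clifford action, and this vector y has norm 1. -/

import Mathlib

open Complex Matrix Finset

/-- The explicit matrices giving the Clifford action of the basis vectors e₁,…,e₅ of ℝ⁵ on Δ = ℂ⁴. -/
noncomputable def cl : Fin 5 → Matrix (Fin 4) (Fin 4) ℂ :=
  ![!![0,0,0,I; 0,0,I,0; 0,I,0,0; I,0,0,0],
    !![0,0,0,-1; 0,0,1,0; 0,-1,0,0; 1,0,0,0],
    !![0,0,-I,0; 0,0,0,I; -I,0,0,0; 0,I,0,0],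
    !![0,0,1,0; 0,0,0,1; -1,0,0,0; 0,-1,0,0],
    !![I,0,0,0; 0,I,0,0; 0,0,-I,0; 0,0,0,-I]]

/-- Clifford multiplication of a vector x ∈ ℝ⁵ with a spinor φ ∈ Δ = ℂ⁴. -/
noncomputable def act (x : Fin 5 → ℝ) (φ : Fin 4 → ℂ) : Fin 4 → ℂ :=
  ∑ i, x i • (cl i).mulVec φ

/-- The standard Hermitian product on Δ = ℂ⁴ (antilinear in the first argument). -/
noncomputable def herm (φ ψ : Fin 4 → ℂ) : ℂ := ∑ i, starRingEnd ℂ (φ i) * ψ i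

set_option maxHeartbeats 1000000 in
lemma exist_aux (a b c d : ℂ)
    (hn : a.re^2 + a.im^2 + b.re^2 + b.im^2 + c.re^2 + c.im^2 + d.re^2 + d.im^2 = 1) :
    act ![2*(a.re*d.re + a.im*d.im + b.re*c.re + b.im*c.im),
      -2*(a.re*d.im - a.im*d.re) + 2*(b.re*c.im - b.im*c.re),
      -2*(a.re*c.re + a.im*c.im) + 2*(b.re*d.re + b.im*d.im),
      2*(a.re*c.im - a.im*c.re) + 2*(b.re*d.im - b.im*d.re),
      a.re^2+a.im^2+b.re^2+b.im^2-c.re^2-c.im^2-d.re^2-d.im^2] ![a,b,c,d]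
      = Complex.I • ![a,b,c,d] := by
  have h0 : act ![2*(a.re*d.re + a.im*d.im + b.re*c.re + b.im*c.im),
      -2*(a.re*d.im - a.im*d.re) + 2*(b.re*c.im - b.im*c.re),
      -2*(a.re*c.re + a.im*c.im) + 2*(b.re*d.re + b.im*d.im),
      2*(a.re*c.im - a.im*c.re) + 2*(b.re*d.im - b.im*d.re),
      a.re^2+a.im^2+b.re^2+b.im^2-c.re^2-c.im^2-d.re^2-d.im^2] ![a,b,c,d] 0
      = (Complex.I • ![a,b,c,d]) 0 := by
    simp only [act, cl, Fin.sum_univ_five, Matrix.cons_mulVec, Matrix.cons_dotProduct,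
      dotProduct_of_isEmpty, Matrix.cons_val_zero, Matrix.cons_val_one, Matrix.head_cons,
      Matrix.cons_val_two, Matrix.cons_val_three, Matrix.cons_val_four, Matrix.tail_cons,
      Matrix.empty_mulVec, Matrix.cons_val', Matrix.cons_val_fin_one, Matrix.empty_val',
      Matrix.head_fin_const, Finset.sum_apply, Pi.smul_apply, Pi.add_apply, smul_eq_mul,
      Complex.real_smul, Matrix.cons_val_succ]
    rw [Complex.ext_iff]
    constructor <;>
    · simp only [Complex.add_re, Complex.add_im, Complex.mul_re, Complex.mul_im,
        Complex.I_re, Complex.I_im, Complex.ofReal_re, Complex.ofReal_im, Complex.neg_re,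
        Complex.neg_im, Complex.zero_re, Complex.zero_im, Complex.one_re, Complex.one_im,
        Complex.sub_re, Complex.sub_im]
      first
      | linear_combination (-(a.im)) * hn
      | linear_combination (a.re) * hn
  have h1 : act ![2*(a.re*d.re + a.im*d.im + b.re*c.re + b.im*c.im),
      -2*(a.re*d.im - a.im*d.re) + 2*(b.re*c.im - b.im*c.re),
      -2*(a.re*c.re + a.im*c.im) + 2*(b.re*d.re + b.im*d.im),
      2*(a.re*c.im - a.im*c.re) + 2*(b.re*d.im - b.im*d.re),
      a.re^2+a.im^2+b.re^2+b.im^2-c.re^2-c.im^2-d.re^2-d.im^2] ![a,b,c,d] 1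
      = (Complex.I • ![a,b,c,d]) 1 := by
    simp only [act, cl, Fin.sum_univ_five, Matrix.cons_mulVec, Matrix.cons_dotProduct,
      dotProduct_of_isEmpty, Matrix.cons_val_zero, Matrix.cons_val_one, Matrix.head_cons,
      Matrix.cons_val_two, Matrix.cons_val_three, Matrix.cons_val_four, Matrix.tail_cons,
      Matrix.empty_mulVec, Matrix.cons_val', Matrix.cons_val_fin_one, Matrix.empty_val',
      Matrix.head_fin_const, Finset.sum_apply, Pi.smul_apply, Pi.add_apply, smul_eq_mul,
      Complex.real_smul, Matrix.cons_val_succ]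
    rw [Complex.ext_iff]
    constructor <;>
    · simp only [Complex.add_re, Complex.add_im, Complex.mul_re, Complex.mul_im,
        Complex.I_re, Complex.I_im, Complex.ofReal_re, Complex.ofReal_im, Complex.neg_re,
        Complex.neg_im, Complex.zero_re, Complex.zero_im, Complex.one_re, Complex.one_im,
        Complex.sub_re, Complex.sub_im]
      first
      | linear_combination (-(b.im)) * hn
      | linear_combination (b.re) * hn
  have h2 : act ![2*(a.re*d.re + a.im*d.im + b.re*c.re + b.im*c.im),
      -2*(a.re*d.im - a.im*d.re) + 2*(b.re*c.im - b.im*c.re),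
      -2*(a.re*c.re + a.im*c.im) + 2*(b.re*d.re + b.im*d.im),
      2*(a.re*c.im - a.im*c.re) + 2*(b.re*d.im - b.im*d.re),
      a.re^2+a.im^2+b.re^2+b.im^2-c.re^2-c.im^2-d.re^2-d.im^2] ![a,b,c,d] 2
      = (Complex.I • ![a,b,c,d]) 2 := by
    simp only [act, cl, Fin.sum_univ_five, Matrix.cons_mulVec, Matrix.cons_dotProduct,
      dotProduct_of_isEmpty, Matrix.cons_val_zero, Matrix.cons_val_one, Matrix.head_cons,
      Matrix.cons_val_two, Matrix.cons_val_three, Matrix.cons_val_four, Matrix.tail_cons,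
      Matrix.empty_mulVec, Matrix.cons_val', Matrix.cons_val_fin_one, Matrix.empty_val',
      Matrix.head_fin_const, Finset.sum_apply, Pi.smul_apply, Pi.add_apply, smul_eq_mul,
      Complex.real_smul, Matrix.cons_val_succ]
    rw [Complex.ext_iff]
    constructor <;>
    · simp only [Complex.add_re, Complex.add_im, Complex.mul_re, Complex.mul_im,
        Complex.I_re, Complex.I_im, Complex.ofReal_re, Complex.ofReal_im, Complex.neg_re,
        Complex.neg_im, Complex.zero_re, Complex.zero_im, Complex.one_re, Complex.one_im,
        Complex.sub_re, Complex.sub_im]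
      first
      | linear_combination (-(c.im)) * hn
      | linear_combination (c.re) * hn
  have h3 : act ![2*(a.re*d.re + a.im*d.im + b.re*c.re + b.im*c.im),
      -2*(a.re*d.im - a.im*d.re) + 2*(b.re*c.im - b.im*c.re),
      -2*(a.re*c.re + a.im*c.im) + 2*(b.re*d.re + b.im*d.im),
      2*(a.re*c.im - a.im*c.re) + 2*(b.re*d.im - b.im*d.re),
      a.re^2+a.im^2+b.re^2+b.im^2-c.re^2-c.im^2-d.re^2-d.im^2] ![a,b,c,d] 3
      = (Complex.I • ![a,b,c,d]) 3 := by
    simp only [act, cl, Fin.sum_univ_five, Matrix.cons_mulVec, Matrix.cons_dotProduct,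
      dotProduct_of_isEmpty, Matrix.cons_val_zero, Matrix.cons_val_one, Matrix.head_cons,
      Matrix.cons_val_two, Matrix.cons_val_three, Matrix.cons_val_four, Matrix.tail_cons,
      Matrix.empty_mulVec, Matrix.cons_val', Matrix.cons_val_fin_one, Matrix.empty_val',
      Matrix.head_fin_const, Finset.sum_apply, Pi.smul_apply, Pi.add_apply, smul_eq_mul,
      Complex.real_smul, Matrix.cons_val_succ]
    rw [Complex.ext_iff]
    constructor <;>
    · simp only [Complex.add_re, Complex.add_im, Complex.mul_re, Complex.mul_im,
        Complex.I_re, Complex.I_im, Complex.ofReal_re, Complex.ofReal_im, Complex.neg_re,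
        Complex.neg_im, Complex.zero_re, Complex.zero_im, Complex.one_re, Complex.one_im,
        Complex.sub_re, Complex.sub_im]
      first
      | linear_combination (-(d.im)) * hn
      | linear_combination (d.re) * hn
  funext k
  fin_cases k
  · exact h0
  · exact h1
  · exact h2
  · exact h3

set_option maxHeartbeats 4000000 in
lemma key_stmt2 (z : Fin 5 → ℝ) (φ : Fin 4 → ℂ) :
    herm (act z φ) (act z φ) = ((∑ i, (z i)^2 : ℝ) : ℂ) * herm φ φ := by
  have hφ4 : φ = ![φ 0, φ 1, φ 2, φ 3] := by funext i; fin_cases i <;> rfl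
  have hz5 : z = ![z 0, z 1, z 2, z 3, z 4] := by funext i; fin_cases i <;> rfl
  rw [hφ4, hz5]
  simp only [herm, act, cl, Fin.sum_univ_four, Fin.sum_univ_five,
    Matrix.cons_mulVec, Matrix.mulVec_empty, Matrix.cons_val', Matrix.cons_val_zero,
    Matrix.cons_val_one, Matrix.head_cons, Pi.add_apply, Pi.smul_apply, Pi.zero_apply,
    Complex.real_smul, Matrix.cons_dotProduct, dotProduct_of_isEmpty, Matrix.cons_val_fin_one,
    Matrix.empty_val', Matrix.head_fin_const, Matrix.cons_val_two, Matrix.cons_val_three,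
    Matrix.cons_val_four, Matrix.tail_cons, Matrix.empty_mulVec, Matrix.cons_val_succ,
    map_add, _root_.map_mul, map_sum, Complex.conj_I, Complex.conj_ofReal, map_neg,
    _root_.map_one, map_zero, Complex.I_sq, Complex.ofReal_add, Complex.ofReal_pow]
  ring_nf
  simp only [Complex.I_sq]
  ring

lemma normsq_stmt2 (y : Fin 5 → ℝ) (φ : Fin 4 → ℂ) (hφ : herm φ φ = 1)
    (h : act y φ = Complex.I • φ) : ∑ i, (y i)^2 = 1 := by
  have hk := key_stmt2 y φ
  rw [h, hφ, mul_one] at hk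
  have : herm (Complex.I • φ) (Complex.I • φ) = herm φ φ := by
    simp only [herm, Pi.smul_apply, smul_eq_mul, _root_.map_mul, Complex.conj_I]
    ring_nf
    simp only [Complex.I_sq]
    ring
  rw [this, hφ] at hk
  exact_mod_cast hk.symm

lemma uniq_stmt2 (φ : Fin 4 → ℂ) (hφ : herm φ φ = 1) (y y' : Fin 5 → ℝ)
    (h : act y φ = act y' φ) : y = y' := by
  have hz : act (y - y') φ = 0 := by
    have : act (y - y') φ = act y φ - act y' φ := by
      simp [act, sub_smul, Finset.sum_sub_distrib]
    rw [this, h, sub_self]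
  have hk := key_stmt2 (y - y') φ
  rw [hz, hφ, mul_one] at hk
  have h0 : herm 0 0 = 0 := by simp [herm]
  rw [h0] at hk
  have hr : (∑ i, (y i - y' i)^2 : ℝ) = 0 := by
    have := hk.symm
    exact_mod_cast this
  funext i
  have hi : (y i - y' i)^2 = 0 := by
    have := (Finset.sum_eq_zero_iff_of_nonneg (fun j _ => sq_nonneg (y j - y' j))).mp hr i
      (Finset.mem_univ i)
    simpa using this
  have := pow_eq_zero_iff (n := 2) (by norm_num) |>.mp hi
  linarith [sub_eq_zero.mp this]

/-- for every unit spinor φ there is a unique y ∈ ℝ⁵ with y·φ = iφ, and it has norm 1. -/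
theorem stmt2 (φ : Fin 4 → ℂ) (hφ : herm φ φ = 1) :
    (∃! y : Fin 5 → ℝ, act y φ = Complex.I • φ) ∧
    (∀ y : Fin 5 → ℝ, act y φ = Complex.I • φ → ∑ i, (y i)^2 = 1) := by
  have hn : (φ 0).re^2 + (φ 0).im^2 + (φ 1).re^2 + (φ 1).im^2 + (φ 2).re^2 + (φ 2).im^2
      + (φ 3).re^2 + (φ 3).im^2 = 1 := by
    have h := congrArg Complex.re hφ
    simp only [herm, Fin.sum_univ_four, Complex.add_re, Complex.mul_re, Complex.conj_re,
      Complex.conj_im, Complex.one_re] at h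
    linear_combination h
  set a := φ 0 with ha
  set b := φ 1 with hb
  set c := φ 2 with hc
  set d := φ 3 with hd
  have hφ4 : φ = ![a, b, c, d] := by funext i; fin_cases i <;> rfl
  have hw : act ![2*(a.re*d.re + a.im*d.im + b.re*c.re + b.im*c.im),
      -2*(a.re*d.im - a.im*d.re) + 2*(b.re*c.im - b.im*c.re),
      -2*(a.re*c.re + a.im*c.im) + 2*(b.re*d.re + b.im*d.im),
      2*(a.re*c.im - a.im*c.re) + 2*(b.re*d.im - b.im*d.re),
      a.re^2+a.im^2+b.re^2+b.im^2-c.re^2-c.im^2-d.re^2-d.im^2] φ = Complex.I • φ := by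
    rw [hφ4]
    exact exist_aux a b c d hn
  refine ⟨⟨_, hw, fun y hy => uniq_stmt2 φ hφ y _ (by rw [hy, hw])⟩,
    fun y hy => normsq_stmt2 y φ hφ hy⟩
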